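/- For β ∈ GF(r)*, if βGF(q)* ∩ C_i^{(N,r)} is nonempty then its cardinality is (r-1)/lcm(N, (r-1)/(q-1)). -/

import Mathlib

open scoped Classical

/-- if `β·GF(q)* ∩ Cᵢ^{(N,r)} ≠ ∅` then its cardinality is
`(r-1)/lcm(N,(r-1)/(q-1))`. -/
theorem stmt4 (p s m N q r i : ℕ) (hp : p.Prime) (hs : 0 < s) (hm : 0 < m)
    (hq : q = p ^ s) (hr : r = q ^ m)
    (F : Type) [Field F] [Fintype F] (hcard : Fintype.card F = r)
    (hN : N ∣ r - 1)
    (α : Fˣ) (hα : ∀ x : Fˣ, x ∈ Subgroup.zpowers α)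
    (β : Fˣ)
    (hne : ({x : Fˣ | ∃ j : ℕ, x = β * (α ^ ((r - 1) / (q - 1))) ^ j} ∩
        {x : Fˣ | ∃ j : ℕ, x = α ^ i * (α ^ N) ^ j}).Nonempty) :
    Set.ncard ({x : Fˣ | ∃ j : ℕ, x = β * (α ^ ((r - 1) / (q - 1))) ^ j} ∩
        {x : Fˣ | ∃ j : ℕ, x = α ^ i * (α ^ N) ^ j}) =
      (r - 1) / Nat.lcm N ((r - 1) / (q - 1)) := by
  classical
  set d := (r - 1) / (q - 1) with hd
  set g := α ^ d with hg
  set h := α ^ N with hh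
  have hq2 : 2 ≤ q := by
    rw [hq]
    calc 2 ≤ p := hp.two_le
    _ ≤ p ^ s := Nat.le_self_pow hs.ne' p
  have hr2 : 2 ≤ r := by
    rw [hr]
    calc 2 ≤ q := hq2
    _ ≤ q ^ m := Nat.le_self_pow hm.ne' q
  have hn : Fintype.card Fˣ = r - 1 := by rw [Fintype.card_units, hcard]
  have horder : orderOf α = r - 1 := by
    rw [orderOf_eq_card_of_forall_mem_zpowers hα, Nat.card_eq_fintype_card, hn]
  have hdvd_qr : q - 1 ∣ r - 1 := by
    rw [hr]; simpa using Nat.sub_dvd_pow_sub_pow q 1 m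
  have hd_dvd : d ∣ r - 1 := Nat.div_dvd_of_dvd hdvd_qr
  set L := Nat.lcm N d with hL
  have hL_dvd : L ∣ r - 1 := Nat.lcm_dvd hN hd_dvd
  -- subgroup intersection
  have hinter : Subgroup.zpowers g ⊓ Subgroup.zpowers h = Subgroup.zpowers (α ^ L) := by
    apply le_antisymm
    · rintro x hx
      rw [Subgroup.mem_inf] at hx
      obtain ⟨⟨a, ha⟩, ⟨b, hb⟩⟩ := hx
      have hga : α ^ ((d : ℤ) * a) = x := by
        rw [zpow_mul, zpow_natCast]; exact ha
      have hgb : α ^ ((N : ℤ) * b) = x := by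
        rw [zpow_mul, zpow_natCast]; exact hb
      have h1 : α ^ ((d : ℤ) * a - (N : ℤ) * b) = 1 := by
        rw [zpow_sub, hga, hgb, mul_inv_cancel]
      have h2 : ((r - 1 : ℕ) : ℤ) ∣ (d : ℤ) * a - (N : ℤ) * b := by
        rw [← horder]
        exact orderOf_dvd_iff_zpow_eq_one.mpr h1
      have hNd : (N : ℤ) ∣ (d : ℤ) * a := by
        have : (N : ℤ) ∣ (d : ℤ) * a - (N : ℤ) * b :=
          dvd_trans (Int.natCast_dvd_natCast.mpr hN) h2
        have := dvd_add this (Dvd.intro b rfl)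
        simpa using this
      have hdd : (d : ℤ) ∣ (d : ℤ) * a := Dvd.intro a rfl
      have hLd : (L : ℤ) ∣ (d : ℤ) * a := by
        rcases hNd with ⟨u, hu⟩
        rcases hdd with ⟨v, hv⟩
        have : ((Nat.lcm N d : ℕ) : ℤ) ∣ (d : ℤ) * a := by
          have := lcm_dvd (α := ℤ) ⟨u, hu⟩ ⟨v, hv⟩
          rw [← Int.coe_lcm] at this
          exact this
        simpa [hL] using this
      rcases hLd with ⟨t, ht⟩
      refine ⟨t, ?_⟩
      show (α ^ L) ^ t = x
      rw [← zpow_natCast α L, ← zpow_mul, ← ht, hga]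
    · rw [Subgroup.zpowers_le, Subgroup.mem_inf]
      constructor
      · refine ⟨((L / d : ℕ) : ℤ), ?_⟩
        show g ^ ((L / d : ℕ) : ℤ) = α ^ L
        rw [hg, ← zpow_natCast α d, ← zpow_mul, ← Nat.cast_mul,
            Nat.mul_div_cancel' (Nat.dvd_lcm_right N d), zpow_natCast]
      · refine ⟨((L / N : ℕ) : ℤ), ?_⟩
        show h ^ ((L / N : ℕ) : ℤ) = α ^ L
        rw [hh, ← zpow_natCast α N, ← zpow_mul, ← Nat.cast_mul,
            Nat.mul_div_cancel' (Nat.dvd_lcm_left N d), zpow_natCast]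
  obtain ⟨c, hc1, hc2⟩ := hne
  have memS1 : ∀ x : Fˣ, x ∈ {x : Fˣ | ∃ j : ℕ, x = β * g ^ j} ↔
      β⁻¹ * x ∈ Subgroup.zpowers g := by
    intro x
    constructor
    · rintro ⟨j, rfl⟩
      simpa using Subgroup.npow_mem_zpowers g j
    · intro hx
      obtain ⟨j, hj⟩ := mem_powers_iff_mem_zpowers.mpr hx
      have hj' : g ^ j = β⁻¹ * x := hj
      exact ⟨j, by rw [hj']; group⟩
  have memS2 : ∀ x : Fˣ, x ∈ {x : Fˣ | ∃ j : ℕ, x = α ^ i * h ^ j} ↔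
      (α ^ i)⁻¹ * x ∈ Subgroup.zpowers h := by
    intro x
    constructor
    · rintro ⟨j, rfl⟩
      simpa using Subgroup.npow_mem_zpowers h j
    · intro hx
      obtain ⟨j, hj⟩ := mem_powers_iff_mem_zpowers.mpr hx
      have hj' : h ^ j = (α ^ i)⁻¹ * x := hj
      exact ⟨j, by rw [hj']; group⟩
  have hc1' : β⁻¹ * c ∈ Subgroup.zpowers g := (memS1 c).mp hc1
  have hc2' : (α ^ i)⁻¹ * c ∈ Subgroup.zpowers h := (memS2 c).mp hc2
  have hset : ({x : Fˣ | ∃ j : ℕ, x = β * g ^ j} ∩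
      {x : Fˣ | ∃ j : ℕ, x = α ^ i * h ^ j}) =
      (fun y => c * y) '' ((Subgroup.zpowers g ⊓ Subgroup.zpowers h : Subgroup Fˣ) : Set Fˣ) := by
    ext x
    simp only [Set.mem_inter_iff, memS1, memS2, Set.mem_image, SetLike.mem_coe,
      Subgroup.mem_inf]
    constructor
    · rintro ⟨h1, h2⟩
      refine ⟨c⁻¹ * x, ⟨?_, ?_⟩, by group⟩
      · have h1' : (β⁻¹ * c) * (c⁻¹ * x) ∈ Subgroup.zpowers g := by
          have : (β⁻¹ * c) * (c⁻¹ * x) = β⁻¹ * x := by group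
          rw [this]; exact h1
        exact (Subgroup.mul_mem_cancel_left _ hc1').mp h1'
      · have h2' : ((α ^ i)⁻¹ * c) * (c⁻¹ * x) ∈ Subgroup.zpowers h := by
          have : ((α ^ i)⁻¹ * c) * (c⁻¹ * x) = (α ^ i)⁻¹ * x := by group
          rw [this]; exact h2
        exact (Subgroup.mul_mem_cancel_left _ hc2').mp h2'
    · rintro ⟨y, ⟨hy1, hy2⟩, rfl⟩
      constructor
      · have : β⁻¹ * (c * y) = (β⁻¹ * c) * y := by group
        rw [this]; exact Subgroup.mul_mem _ hc1' hy1
      · have : (α ^ i)⁻¹ * (c * y) = ((α ^ i)⁻¹ * c) * y := by group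
        rw [this]; exact Subgroup.mul_mem _ hc2' hy2
  rw [hset, Set.ncard_image_of_injective _ (mul_right_injective c), hinter,
    ← Nat.card_coe_set_eq]
  have : Nat.card ((Subgroup.zpowers (α ^ L) : Subgroup Fˣ) : Set Fˣ) =
      Nat.card (Subgroup.zpowers (α ^ L)) := rfl
  rw [this, Nat.card_zpowers, orderOf_pow, horder, Nat.gcd_eq_right hL_dvd]
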